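/- Let b₁,…,b_d be nonnegative integers and let M be a d×d complex matrix. Then the Frobenius norm of Split_{b₁,…,b_d}(M) is at most the Frobenius norm of M. -/

import Mathlib

open Matrix BigOperators

/-- The index set of `Split`: pairs `(j, s)` with `j ∈ [d]` and `s ∈ {0,1}^{b j}`. -/
abbrev SIdx (d : ℕ) (b : Fin d → ℕ) := Σ j : Fin d, Fin (b j) → Bool

/-- `s` is a prefix of `t` (as bit strings). -/
def BitPrefix {a c : ℕ} (s : Fin a → Bool) (t : Fin c → Bool) : Prop :=
  ∃ h : a ≤ c, ∀ i : Fin a, t (Fin.castLE h i) = s i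

open scoped Classical in
/-- The splitting map `Split_{b₁,…,b_d}`: the entry at `((j₁,s₁),(j₂,s₂))` is
`M_{j₁ j₂} / 2^{max(b_{j₁}, b_{j₂})}` if one of `s₁, s₂` is a prefix of the other,
and `0` otherwise. -/
noncomputable def Split {d : ℕ} (b : Fin d → ℕ) (M : Matrix (Fin d) (Fin d) ℂ) :
    Matrix (SIdx d b) (SIdx d b) ℂ := fun p q =>
  if BitPrefix p.2 q.2 ∨ BitPrefix q.2 p.2 then
    M p.1 q.1 / 2 ^ max (b p.1) (b q.1) else 0

open scoped Classical in
/-- The dual splitting map `DSplit_{b₁,…,b_d}`: the entry at `((j₁,s₁),(j₂,s₂))` is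
`N_{j₁ j₂}` if one of `s₁, s₂` is a prefix of the other, and `0` otherwise. -/
noncomputable def DSplit {d : ℕ} (b : Fin d → ℕ) (N : Matrix (Fin d) (Fin d) ℂ) :
    Matrix (SIdx d b) (SIdx d b) ℂ := fun p q =>
  if BitPrefix p.2 q.2 ∨ BitPrefix q.2 p.2 then N p.1 q.1 else 0

/-- Frobenius norm of a matrix. -/
noncomputable def frobNorm {n m : Type*} [Fintype n] [Fintype m] (A : Matrix n m ℂ) : ℝ :=
  Real.sqrt (∑ i, ∑ j, ‖A i j‖ ^ 2)

/-- Operator (spectral) norm of a matrix. -/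
noncomputable def opNorm {n : Type*} [Fintype n] [DecidableEq n] (A : Matrix n n ℂ) : ℝ :=
  ‖(Matrix.toEuclideanCLM (𝕜 := ℂ) A : EuclideanSpace ℂ n →L[ℂ] EuclideanSpace ℂ n)‖

open scoped Classical

lemma bitprefix_iff_eq {a c : ℕ} (h : a ≤ c) (s : Fin a → Bool) (t : Fin c → Bool) :
    BitPrefix s t ↔ s = fun i => t (Fin.castLE h i) := by
  constructor
  · rintro ⟨h', hp⟩
    funext i
    exact (hp i).symm
  · rintro rfl
    exact ⟨h, fun i => rfl⟩

lemma prefix_or_iff {a c : ℕ} (h : a ≤ c) (s : Fin a → Bool) (t : Fin c → Bool) :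
    (BitPrefix s t ∨ BitPrefix t s) ↔ BitPrefix s t := by
  constructor
  · rintro (hs | ⟨h', hp⟩)
    · exact hs
    · have hac : a = c := le_antisymm h h'
      subst hac
      exact ⟨le_refl a, fun i => (hp i).symm⟩
  · exact Or.inl

lemma mySumInner {a c : ℕ} (h : a ≤ c) (x : ℝ) (t : Fin c → Bool) :
    ∑ s : Fin a → Bool, (if BitPrefix s t ∨ BitPrefix t s then x else 0) = x := by
  have he : ∀ s : Fin a → Bool, (if BitPrefix s t ∨ BitPrefix t s then x else 0)
      = if s = (fun i => t (Fin.castLE h i)) then x else 0 := by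
    intro s
    exact if_congr ((prefix_or_iff h s t).trans (bitprefix_iff_eq h s t)) rfl rfl
  simp_rw [he]
  simp

lemma key {a c : ℕ} (h : a ≤ c) (x : ℝ) (hx : 0 ≤ x) :
    ∑ s : Fin a → Bool, ∑ t : Fin c → Bool,
      (if BitPrefix s t ∨ BitPrefix t s then x / 4 ^ c else 0) ≤ x := by
  rw [Finset.sum_comm]
  have he : ∀ t : Fin c → Bool,
      ∑ s : Fin a → Bool, (if BitPrefix s t ∨ BitPrefix t s then x / 4 ^ c else 0) = x / 4 ^ c :=
    fun t => mySumInner h _ t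
  simp_rw [he]
  rw [Finset.sum_const, Finset.card_univ]
  have hcard : Fintype.card (Fin c → Bool) = 2 ^ c := by simp
  rw [hcard, nsmul_eq_mul]
  push_cast
  have h2 : (0:ℝ) < 2 ^ c := by positivity
  have heq : (2:ℝ) ^ c * (x / 4 ^ c) = x / 2 ^ c := by
    rw [show (4:ℝ) = 2 * 2 by norm_num, mul_pow]
    field_simp
  rw [heq]
  exact div_le_self hx (one_le_pow₀ (by norm_num))

lemma key' (a c : ℕ) (x : ℝ) (hx : 0 ≤ x) :
    ∑ s : Fin a → Bool, ∑ t : Fin c → Bool,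
      (if BitPrefix s t ∨ BitPrefix t s then x / 4 ^ max a c else 0) ≤ x := by
  rcases le_total a c with h | h
  · rw [max_eq_right h]; exact key h x hx
  · rw [max_eq_left h, Finset.sum_comm]
    refine le_trans (le_of_eq ?_) (key h x hx)
    refine Finset.sum_congr rfl fun t _ => Finset.sum_congr rfl fun s _ => ?_
    exact if_congr or_comm rfl rfl

/-- `‖Split_{b}(M)‖_F ≤ ‖M‖_F`. -/
theorem frobNorm_split_le {d : ℕ} (b : Fin d → ℕ) (M : Matrix (Fin d) (Fin d) ℂ) :
    frobNorm (Split b M) ≤ frobNorm M := by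
  have hentry : ∀ (j₁ j₂ : Fin d) (s₁ : Fin (b j₁) → Bool) (s₂ : Fin (b j₂) → Bool),
      ‖Split b M ⟨j₁, s₁⟩ ⟨j₂, s₂⟩‖ ^ 2 =
      if BitPrefix s₁ s₂ ∨ BitPrefix s₂ s₁ then
        ‖M j₁ j₂‖ ^ 2 / 4 ^ max (b j₁) (b j₂) else 0 := by
    intro j₁ j₂ s₁ s₂
    simp only [Split]
    split_ifs with hc
    · rw [norm_div, div_pow, norm_pow]
      congr 1
      rw [Complex.norm_ofNat, ← pow_mul, mul_comm, pow_mul]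
      norm_num
    · simp
  unfold frobNorm
  apply Real.sqrt_le_sqrt
  simp_rw [← Finset.univ_sigma_univ, Finset.sum_sigma]
  refine Finset.sum_le_sum fun j₁ _ => ?_
  rw [Finset.sum_comm]
  refine Finset.sum_le_sum fun j₂ _ => ?_
  refine le_trans (le_of_eq ?_) (key' (b j₁) (b j₂) (‖M j₁ j₂‖ ^ 2) (by positivity))
  exact Finset.sum_congr rfl fun s₁ _ => Finset.sum_congr rfl fun s₂ _ => hentry j₁ j₂ s₁ s₂
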